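/- Let n ≥ 2 be a natural number and define C₅ : (0,1/2) → ℝ by C₅(w) = (10w+3)/(30·w·(1−2w)) + 1/(6w) + 4(n−1)/(15w). Then w* = (n − √n)/(2(n−1)) lies in (0,1/2) and is the unique minimizer of C₅ on (0,1/2); that is, C₅(w*) < C₅(w) for every w ∈ (0,1/2) with w ≠ w*. -/

import Mathlib

lemma aux_c5_key (s w : ℝ) (hs : 1 < s) (hw0 : 0 < w) (hw1 : w < 1/2)
    (hne : 2*(s+1)*w ≠ s) :
    (10*(s/(2*(s+1))) + 3) / (30 * (s/(2*(s+1))) * (1 - 2*(s/(2*(s+1))))) +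
      1/(6*(s/(2*(s+1)))) + 4*(s*s-1)/(15*(s/(2*(s+1)))) <
    (10*w + 3) / (30*w*(1 - 2*w)) + 1/(6*w) + 4*(s*s-1)/(15*w) := by
  have hs0 : (0:ℝ) < s := by linarith
  have hsp : (0:ℝ) < s + 1 := by linarith
  have hw2 : (0:ℝ) < 1 - 2*w := by linarith
  have h1 : 1 - 2*(s/(2*(s+1))) = 1/(s+1) := by
    field_simp
    ring
  have hL : (10*(s/(2*(s+1))) + 3) / (30 * (s/(2*(s+1))) * (1 - 2*(s/(2*(s+1))))) +
      1/(6*(s/(2*(s+1)))) + 4*(s*s-1)/(15*(s/(2*(s+1)))) = 8*(s+1)^2/15 := by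
    rw [h1]
    field_simp
    ring
  have hR : (10*w + 3) / (30*w*(1 - 2*w)) + 1/(6*w) + 4*(s*s-1)/(15*w)
      = 4*(s*s - 2*(s*s-1)*w) / (15*(w*(1-2*w))) := by
    have hw3 : 1 - 2*w ≠ 0 := hw2.ne'
    rw [div_add_div _ _ (by positivity) (by positivity), div_add_div _ _ (by positivity) (by positivity), div_eq_div_iff (by positivity) (by positivity)]
    ring
  rw [hL, hR, div_lt_div_iff₀ (by norm_num) (by positivity)]
  have h2 : 0 < (2*(s+1)*w - s)^2 := by
    have := sub_ne_zero.mpr hne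
    positivity
  nlinarith [h2]

/-- Quadratic regression, Case 5: unique minimizer of
C₅(w) = (10w+3)/(30w(1-2w)) + 1/(6w) + 4(n-1)/(15w) on (0,1/2). -/
theorem stmt_13 (n : ℕ) (hn : 2 ≤ n) :
    ((n:ℝ) - Real.sqrt n) / (2 * ((n:ℝ) - 1)) ∈ Set.Ioo (0:ℝ) (1/2) ∧
    ∀ w ∈ Set.Ioo (0:ℝ) (1/2),
      w ≠ ((n:ℝ) - Real.sqrt n) / (2 * ((n:ℝ) - 1)) →
      (fun w : ℝ => (10*w + 3) / (30 * w * (1 - 2*w)) + 1 / (6*w) +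
            4 * ((n:ℝ) - 1) / (15*w))
          (((n:ℝ) - Real.sqrt n) / (2 * ((n:ℝ) - 1))) <
        (fun w : ℝ => (10*w + 3) / (30 * w * (1 - 2*w)) + 1 / (6*w) +
            4 * ((n:ℝ) - 1) / (15*w)) w := by
  set s := Real.sqrt n with hsdef
  have hn1 : (1:ℝ) < (n:ℝ) := by exact_mod_cast Nat.lt_of_lt_of_le one_lt_two hn
  have hss : s * s = (n:ℝ) := Real.mul_self_sqrt (by positivity)
  have hs1 : 1 < s := by
    rw [hsdef]
    rw [show (1:ℝ) = Real.sqrt 1 from (Real.sqrt_one).symm]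
    exact Real.sqrt_lt_sqrt (by norm_num) hn1
  have hsp : (0:ℝ) < s + 1 := by linarith
  have hsm : s - 1 ≠ 0 := by intro h; nlinarith
  have hwstar : ((n:ℝ) - s) / (2 * ((n:ℝ) - 1)) = s / (2*(s+1)) := by
    rw [← hss]
    have hd : s*s - 1 ≠ 0 := by intro h; nlinarith
    rw [div_eq_div_iff (mul_ne_zero two_ne_zero hd) (by positivity)]
    ring
  rw [hwstar]
  constructor
  · constructor
    · positivity
    · rw [div_lt_div_iff₀ (by linarith) (by norm_num)]
      linarith
  · intro w hw hne
    simp only []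
    have hne' : 2*(s+1)*w ≠ s := by
      intro h
      apply hne
      rw [eq_div_iff (by linarith)]
      linarith
    have := aux_c5_key s w hs1 hw.1 hw.2 hne'
    rw [← hss]
    convert this using 3
    all_goals push_cast [← hss]; ring
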